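/- For all integers r ≥ 2, m ≥ 2 and every ε > 0, there exists an r-uniform hypergraph with girth at least m and independence number less than ε·n, where n is the number of vertices. -/

import Mathlib

namespace EHAux

open Finset
open scoped Classical


open scoped Classical

/-! ### Counting helpers -/

lemma cyl_card {n b : ℕ} (A : Finset (Fin n) → Finset (Fin b)) :
    (univ.filter fun ω : Finset (Fin n) → Fin b => ∀ f, ω f ∈ A f).card
      = ∏ f : Finset (Fin n), (A f).card := by
  rw [← Fintype.card_piFinset]
  congr 1
  ext ω
  simp [Fintype.mem_piFinset]

lemma prod_ite_card {n : ℕ} (T : Finset (Finset (Fin n))) (c d : ℕ) :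
    (∏ f : Finset (Fin n), (if f ∈ T then c else d)) = c ^ T.card * d ^ (2^n - T.card) := by
  rw [← Finset.prod_filter_mul_prod_filter_not univ (· ∈ T)]
  have h1 : univ.filter (· ∈ T) = T := by ext x; simp
  have h2 : (univ.filter (fun x => x ∉ T)).card = 2^n - T.card := by
    have h3 := Finset.card_filter_add_card_filter_not (s := (univ : Finset (Finset (Fin n)))) (p := (· ∈ T))
    have h4 : (univ : Finset (Finset (Fin n))).card = 2^n := by
      rw [Finset.card_univ, Fintype.card_finset, Fintype.card_fin]
    rw [h1] at h3
    omega
  rw [Finset.prod_congr h1 (fun x hx => if_pos hx),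
      Finset.prod_congr rfl (fun x hx => if_neg (by simpa using (Finset.mem_filter.mp hx).2)),
      Finset.prod_const, Finset.prod_const, h2]

lemma count_val_eq_zero {b : ℕ} (hb : 0 < b) :
    (univ.filter fun x : Fin b => x.val = 0).card = 1 := by
  rw [Finset.card_eq_one]
  refine ⟨⟨0, hb⟩, ?_⟩
  ext x
  simp [Fin.ext_iff]

lemma count_val_ne_zero {b : ℕ} (hb : 0 < b) :
    (univ.filter fun x : Fin b => ¬ x.val = 0).card = b - 1 := by
  have h3 := Finset.card_filter_add_card_filter_not (s := (univ : Finset (Fin b)))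
    (p := fun x : Fin b => x.val = 0)
  rw [count_val_eq_zero hb] at h3
  simp only [Finset.card_univ, Fintype.card_fin] at h3
  omega

lemma cyl_zero_card {n b : ℕ} (hb : 0 < b) (T : Finset (Finset (Fin n))) :
    (univ.filter fun ω : Finset (Fin n) → Fin b => ∀ f ∈ T, (ω f).val = 0).card
      = b ^ (2^n - T.card) := by
  have h : (univ.filter fun ω : Finset (Fin n) → Fin b => ∀ f ∈ T, (ω f).val = 0)
      = (univ.filter fun ω : Finset (Fin n) → Fin b =>
          ∀ f, ω f ∈ (if f ∈ T then univ.filter (fun x : Fin b => x.val = 0) else univ)) := by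
    ext ω
    simp only [Finset.mem_filter, Finset.mem_univ, true_and]
    constructor
    · intro h f
      by_cases hf : f ∈ T
      · simp [hf, h f hf]
      · simp [hf]
    · intro h f hf
      have := h f
      simp [hf] at this
      exact this
  rw [h, cyl_card]
  have h2 : (∏ f : Finset (Fin n), (if f ∈ T then univ.filter (fun x : Fin b => x.val = 0) else univ).card)
      = ∏ f : Finset (Fin n), (if f ∈ T then 1 else b) := by
    apply Finset.prod_congr rfl
    intro f _
    by_cases hf : f ∈ T <;> simp [hf, count_val_eq_zero hb]
  rw [h2, prod_ite_card, one_pow, one_mul]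

lemma indep_event_card {n b r : ℕ} (hb : 0 < b) (S : Finset (Fin n)) :
    (univ.filter fun ω : Finset (Fin n) → Fin b =>
        ∀ f, f ⊆ S → f.card = r → ¬ (ω f).val = 0).card
      = (b-1) ^ (S.card.choose r) * b ^ (2^n - S.card.choose r) := by
  have hT : (Finset.powersetCard r S).card = S.card.choose r := Finset.card_powersetCard r S
  have h : (univ.filter fun ω : Finset (Fin n) → Fin b =>
        ∀ f, f ⊆ S → f.card = r → ¬ (ω f).val = 0)
      = (univ.filter fun ω : Finset (Fin n) → Fin b =>
          ∀ f, ω f ∈ (if f ∈ Finset.powersetCard r S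
            then univ.filter (fun x : Fin b => ¬ x.val = 0) else univ)) := by
    ext ω
    simp only [Finset.mem_filter, Finset.mem_univ, true_and]
    constructor
    · intro h f
      by_cases hf : f ∈ Finset.powersetCard r S
      · rw [Finset.mem_powersetCard] at hf
        simp [hf, h f hf.1 hf.2, Finset.mem_powersetCard]
      · simp [hf]
    · intro h f hfS hfr
      have := h f
      rw [if_pos (Finset.mem_powersetCard.mpr ⟨hfS, hfr⟩)] at this
      simpa using this
  rw [h, cyl_card]
  have h2 : (∏ f : Finset (Fin n), (if f ∈ Finset.powersetCard r S
            then univ.filter (fun x : Fin b => ¬ x.val = 0) else univ).card)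
      = ∏ f : Finset (Fin n), (if f ∈ Finset.powersetCard r S then b - 1 else b) := by
    apply Finset.prod_congr rfl
    intro f _
    by_cases hf : f ∈ Finset.powersetCard r S <;> simp [hf, count_val_ne_zero hb]
  rw [h2, prod_ite_card, hT]

/-! ### Circuits -/

noncomputable def pot (n r s : ℕ) : Finset ((Fin s → Finset (Fin n)) × (Fin s → Fin n)) :=
  univ.filter fun c =>
    Function.Injective c.1 ∧ Function.Injective c.2 ∧
    (∀ j, (c.1 j).card = r) ∧
    (∀ j : Fin s, c.2 j ∈ c.1 j ∧ c.2 j ∈ c.1 ⟨(j.val + 1) % s, Nat.mod_lt _ j.pos⟩)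

noncomputable def circs (n b r s : ℕ) (ω : Finset (Fin n) → Fin b) :
    Finset ((Fin s → Finset (Fin n)) × (Fin s → Fin n)) :=
  (pot n r s).filter fun c => ∀ j, (ω (c.1 j)).val = 0

def prev {s : ℕ} (j : Fin s) : Fin s := ⟨(j.val + (s - 1)) % s, Nat.mod_lt _ j.pos⟩

lemma prev_succ {s : ℕ} (j : Fin s) :
    (⟨((prev j).val + 1) % s, Nat.mod_lt _ j.pos⟩ : Fin s) = j := by
  apply Fin.ext
  show ((j.val + (s-1)) % s + 1) % s = j.val
  rw [Nat.mod_add_mod]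
  have hs : 0 < s := j.pos
  have h : j.val + (s - 1) + 1 = j.val + s := by omega
  rw [h, Nat.add_mod_right, Nat.mod_eq_of_lt j.isLt]

lemma prev_ne {s : ℕ} (hs : 2 ≤ s) (j : Fin s) : prev j ≠ j := by
  intro h
  have h2 := congrArg Fin.val (prev_succ j)
  rw [h] at h2
  simp only at h2
  rcases Nat.lt_or_ge (j.val + 1) s with h3 | h3
  · rw [Nat.mod_eq_of_lt h3] at h2; omega
  · have h4 : j.val + 1 = s := by have := j.isLt; omega
    rw [h4, Nat.mod_self] at h2
    omega

lemma pot_mem_props {n r s : ℕ} (hs : 2 ≤ s) {c : (Fin s → Finset (Fin n)) × (Fin s → Fin n)}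
    (hc : c ∈ pot n r s) (j : Fin s) :
    c.2 j ∈ c.1 j ∧ c.2 (prev j) ∈ c.1 j ∧ c.2 j ≠ c.2 (prev j) := by
  rw [pot, Finset.mem_filter] at hc
  obtain ⟨-, hinj1, hinj2, hcard, hinc⟩ := hc
  refine ⟨(hinc j).1, ?_, ?_⟩
  · have := (hinc (prev j)).2
    rwa [prev_succ j] at this
  · intro h
    exact prev_ne hs j (hinj2 h.symm)

lemma pot_card_le {n r s : ℕ} (hs : 2 ≤ s) (hr : 2 ≤ r) :
    (pot n r s).card ≤ n ^ ((r-1) * s) := by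
  set t : Finset ((Fin s → Fin n) × (Fin s → Finset (Fin n))) :=
    univ ×ˢ (Fintype.piFinset fun _ : Fin s => Finset.powersetCard (r-2) univ) with ht
  have hmap : ∀ c ∈ pot n r s,
      (c.2, fun j => c.1 j \ {c.2 j, c.2 (prev j)}) ∈ t := by
    intro c hc
    rw [ht, Finset.mem_product]
    refine ⟨Finset.mem_univ _, ?_⟩
    rw [Fintype.mem_piFinset]
    intro j
    obtain ⟨h1, h2, h3⟩ := pot_mem_props hs hc j
    rw [Finset.mem_powersetCard_univ, Finset.card_sdiff_of_subset (by
      intro x hx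
      simp only [Finset.mem_insert, Finset.mem_singleton] at hx
      rcases hx with h | h <;> subst h <;> assumption)]
    rw [Finset.card_pair h3]
    have hcard : (c.1 j).card = r := by
      rw [pot, Finset.mem_filter] at hc
      exact hc.2.2.2.1 j
    omega
  have hinj : Set.InjOn (fun c : (Fin s → Finset (Fin n)) × (Fin s → Fin n) =>
      (c.2, fun j => c.1 j \ {c.2 j, c.2 (prev j)})) (pot n r s) := by
    intro c1 hc1 c2 hc2 heq
    simp only [Prod.mk.injEq] at heq
    obtain ⟨hv, he⟩ := heq
    have he' := congrFun he
    apply Prod.ext _ hv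
    funext j
    have h1 := pot_mem_props hs hc1 j
    have h2 := pot_mem_props hs hc2 j
    have hsub1 : ({c1.2 j, c1.2 (prev j)} : Finset (Fin n)) ⊆ c1.1 j := by
      intro x hx
      simp only [Finset.mem_insert, Finset.mem_singleton] at hx
      rcases hx with h | h <;> subst h
      exacts [h1.1, h1.2.1]
    have hsub2 : ({c2.2 j, c2.2 (prev j)} : Finset (Fin n)) ⊆ c2.1 j := by
      intro x hx
      simp only [Finset.mem_insert, Finset.mem_singleton] at hx
      rcases hx with h | h <;> subst h
      exacts [h2.1, h2.2.1]
    calc c1.1 j = c1.1 j \ {c1.2 j, c1.2 (prev j)} ∪ {c1.2 j, c1.2 (prev j)} :=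
          (Finset.sdiff_union_of_subset hsub1).symm
      _ = c2.1 j \ {c2.2 j, c2.2 (prev j)} ∪ {c2.2 j, c2.2 (prev j)} := by
          rw [he' j, hv]
      _ = c2.1 j := Finset.sdiff_union_of_subset hsub2
  have hle := Finset.card_le_card_of_injOn _ hmap hinj
  have htc : t.card = n ^ s * (n.choose (r-2)) ^ s := by
    rw [ht, Finset.card_product, Finset.card_univ, Fintype.card_fun,
      Fintype.card_fin, Fintype.card_fin, Fintype.card_piFinset]
    simp [Finset.card_powersetCard]
  refine hle.trans (htc ▸ ?_)
  calc n ^ s * (n.choose (r-2))^s ≤ n ^ s * (n^(r-2))^s := by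
        apply Nat.mul_le_mul_left
        exact Nat.pow_le_pow_left (Nat.choose_le_pow n (r-2)) s
    _ = n ^ ((r-1) * s) := by
        rw [← pow_mul, ← pow_add]
        congr 1
        have h : r - 1 = 1 + (r - 2) := by omega
        rw [h]
        ring

lemma sum_circs_card {n b r s : ℕ} (hb : 0 < b) :
    ∑ ω : Finset (Fin n) → Fin b, (circs n b r s ω).card
      ≤ (pot n r s).card * b ^ (2^n - s) := by
  have key : ∀ ω : Finset (Fin n) → Fin b, (circs n b r s ω).card
      = ∑ c ∈ pot n r s, if (∀ j, (ω (c.1 j)).val = 0) then 1 else 0 := by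
    intro ω
    rw [circs, Finset.card_filter]
  simp_rw [key]
  rw [Finset.sum_comm]
  have inner : ∀ c ∈ pot n r s,
      (∑ ω : Finset (Fin n) → Fin b, if (∀ j, (ω (c.1 j)).val = 0) then 1 else 0)
        ≤ b ^ (2^n - s) := by
    intro c hc
    have hinj : Function.Injective c.1 := by
      rw [pot, Finset.mem_filter] at hc
      exact hc.2.1
    have hTcard : (Finset.image c.1 univ).card = s := by
      rw [Finset.card_image_of_injective _ hinj, Finset.card_univ, Fintype.card_fin]
    have h : (∑ ω : Finset (Fin n) → Fin b, if (∀ j, (ω (c.1 j)).val = 0) then 1 else 0)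
        = (univ.filter fun ω : Finset (Fin n) → Fin b =>
            ∀ f ∈ Finset.image c.1 univ, (ω f).val = 0).card := by
      rw [Finset.card_filter]
      apply Finset.sum_congr rfl
      intro ω _
      congr 1
      simp only [eq_iff_iff]
      constructor
      · intro h f hf
        obtain ⟨j, -, rfl⟩ := Finset.mem_image.mp hf
        exact h j
      · intro h j
        exact h _ (Finset.mem_image.mpr ⟨j, Finset.mem_univ _, rfl⟩)
    rw [h, cyl_zero_card hb, hTcard]
  calc (∑ c ∈ pot n r s, ∑ ω : Finset (Fin n) → Fin b,
          if (∀ j, (ω (c.1 j)).val = 0) then 1 else 0)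
      ≤ ∑ c ∈ pot n r s, b ^ (2^n - s) := Finset.sum_le_sum inner
    _ = (pot n r s).card * b ^ (2^n - s) := by rw [Finset.sum_const, smul_eq_mul]

/-! ### Numeric lemmas -/

lemma two_mul_pred_pow_le {b : ℕ} (hb : 2 ≤ b) : 2 * (b-1)^b ≤ b^b := by
  have hb1 : (1:ℝ) ≤ (b:ℝ) - 1 := by
    have : (2:ℝ) ≤ b := by exact_mod_cast hb
    linarith
  have hc : (0:ℝ) < (b:ℝ) - 1 := by linarith
  have hber : (1 : ℝ) + (b:ℝ) * (1/((b:ℝ)-1)) ≤ (1 + 1/((b:ℝ)-1))^b := by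
    apply one_add_mul_le_pow
    have : (0:ℝ) ≤ 1/((b:ℝ)-1) := by positivity
    linarith
  have h2 : (2:ℝ) ≤ (1 + 1/((b:ℝ)-1))^b := by
    refine le_trans ?_ hber
    have : (1:ℝ) ≤ (b:ℝ) * (1/((b:ℝ)-1)) := by
      rw [mul_one_div, le_div_iff₀ hc]
      linarith
    linarith
  have hkey : (2:ℝ) * ((b:ℝ)-1)^b ≤ (b:ℝ)^b := by
    have h3 : (1 + 1/((b:ℝ)-1)) = (b:ℝ)/((b:ℝ)-1) := by field_simp; ring
    rw [h3, div_pow] at h2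
    have hpow : (0:ℝ) < ((b:ℝ)-1)^b := by positivity
    calc (2:ℝ) * ((b:ℝ)-1)^b ≤ ((b:ℝ)^b / ((b:ℝ)-1)^b) * ((b:ℝ)-1)^b := by
          apply mul_le_mul_of_nonneg_right h2 (le_of_lt hpow)
      _ = (b:ℝ)^b := by field_simp
  have hcast : ((b:ℝ) - 1) = ((b - 1 : ℕ) : ℝ) := by
    rw [Nat.cast_sub (by omega)]; simp
  rw [hcast] at hkey
  exact_mod_cast hkey

lemma pow_two_mul_pred_pow_le {b t M : ℕ} (hb : 2 ≤ b) (hM : b * t ≤ M) :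
    2^t * (b-1)^M ≤ b^M := by
  have h1 : 2^t * (b-1)^(b*t) ≤ b^(b*t) := by
    calc 2^t * (b-1)^(b*t) = (2 * (b-1)^b)^t := by
          rw [mul_pow, ← pow_mul, mul_comm b t]
      _ ≤ (b^b)^t := Nat.pow_le_pow_left (two_mul_pred_pow_le hb) t
      _ = b^(b*t) := by rw [← pow_mul, mul_comm]
  calc 2^t * (b-1)^M = 2^t * (b-1)^(b*t) * (b-1)^(M - b*t) := by
        rw [mul_assoc, ← pow_add]
        congr 2
        omega
    _ ≤ b^(b*t) * b^(M - b*t) :=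
        Nat.mul_le_mul h1 (Nat.pow_le_pow_left (by omega) _)
    _ = b^M := by rw [← pow_add]; congr 1; omega

lemma choose_le_two_pow (k r : ℕ) : k.choose r ≤ 2^k := by
  rcases le_or_gt r k with h | h
  · calc k.choose r ≤ ∑ i ∈ Finset.range (k+1), k.choose i :=
        Finset.single_le_sum (fun i _ => Nat.zero_le _) (Finset.mem_range.mpr (by omega))
      _ = 2^k := Nat.sum_range_choose k
  · rw [Nat.choose_eq_zero_of_lt h]; exact Nat.zero_le _

end EHAux

open EHAux Finset
open scoped Classical

/-- **Erdős–Hajnal.** For all `r, m ≥ 2` and every `ε > 0`, there exists an `r`-uniform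
hypergraph with girth at least `m` (it has no circuit of length `s` for any `2 ≤ s < m`)
and independence number less than `ε·n`, where `n` is its number of vertices. -/
theorem exists_high_girth_low_independence_hypergraph
    (r m : ℕ) (hr : 2 ≤ r) (hm : 2 ≤ m) (ε : ℝ) (hε : 0 < ε) :
    ∃ (n : ℕ) (E : Finset (Finset (Fin n))),
      (∀ e ∈ E, e.card = r) ∧
      (∀ s : ℕ, ∀ hs : 2 ≤ s, s < m →
        ¬ ∃ (e : Fin s → Finset (Fin n)) (v : Fin s → Fin n),
          Function.Injective e ∧ Function.Injective v ∧
          (∀ j, e j ∈ E) ∧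
          (∀ j : Fin s, v j ∈ e j ∧
            v j ∈ e ⟨(j.val + 1) % s, Nat.mod_lt _ (by omega)⟩)) ∧
      (∀ S : Finset (Fin n), (∀ e ∈ E, ¬ e ⊆ S) → (S.card : ℝ) < ε * n) := by
  classical
  -- normalize ε
  set ε' : ℝ := min ε 1 with hε'def
  have hε'pos : 0 < ε' := lt_min hε one_pos
  have hε'le : ε' ≤ ε := min_le_left _ _
  have hε'1 : ε' ≤ 1 := min_le_right _ _
  -- choose the scale parameter q
  obtain ⟨q, hq⟩ := exists_nat_ge
    (max (max 2 (4*(m:ℝ)^2/ε')) (max (4*(r:ℝ)/ε') (2*(r:ℝ)^r*(4/ε')^r)))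
  have hq2 : 2 ≤ q := by
    have h : (2:ℝ) ≤ q := le_trans (le_trans (le_max_left _ _) (le_max_left _ _)) hq
    exact_mod_cast h
  have hq1R : (1:ℝ) ≤ q := by
    have : (2:ℝ) ≤ q := by exact_mod_cast hq2
    linarith
  have hqA : 4*(m:ℝ)^2 ≤ ε' * q := by
    have h := le_trans (le_trans (le_max_right _ _) (le_max_left _ _)) hq
    rw [div_le_iff₀ hε'pos] at h
    linarith [mul_comm (q:ℝ) ε']
  have hqB : 4*(r:ℝ) ≤ ε' * q := by
    have h := le_trans (le_trans (le_max_left _ _) (le_max_right _ _)) hq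
    rw [div_le_iff₀ hε'pos] at h
    linarith [mul_comm (q:ℝ) ε']
  have hqC : 2*(r:ℝ)^r*(4/ε')^r ≤ q :=
    le_trans (le_trans (le_max_right _ _) (le_max_right _ _)) hq
  -- main parameters
  set n : ℕ := q^(2*m) with hndef
  set e₀ : ℕ := 2*m*(r-1) with he₀def
  have he₀4 : 4 ≤ e₀ := by
    have h1 : 4 ≤ 2*m := by omega
    have h2 : 1 ≤ r-1 := by omega
    calc 4 = 4*1 := rfl
      _ ≤ (2*m)*(r-1) := Nat.mul_le_mul h1 h2
  set b : ℕ := q^(e₀ - 1) with hbdef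
  have hb2 : 2 ≤ b := le_trans hq2 (Nat.le_self_pow (by omega) q)
  have hn2 : 2 ≤ n := le_trans hq2 (Nat.le_self_pow (by omega) q)
  have hnrb : n^(r-1) = q * b := by
    rw [hndef, hbdef, ← pow_mul, ← he₀def, ← pow_succ']
    congr 1
    omega
  have hmn : m ≤ n := by
    calc m ≤ 2^m := Nat.le_of_lt (Nat.lt_two_pow_self (n := m))
      _ ≤ q^m := Nat.pow_le_pow_left hq2 m
      _ ≤ q^(2*m) := Nat.pow_le_pow_right (by omega) (by omega)
  have hn2pow : n ≤ 2^n := Nat.le_of_lt (Nat.lt_two_pow_self (n := n))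
  set k : ℕ := ⌈ε' * n / 2⌉₊ with hkdef
  set T : ℕ := 2*m*q^(m-1) with hTdef
  set X : (Finset (Fin n) → Fin b) → ℕ :=
    fun ω => ∑ s ∈ Finset.Ico 2 m, (circs n b r s ω).card with hXdef
  -- expectation of circuit count
  have hEX : ∑ ω : Finset (Fin n) → Fin b, X ω ≤ (m * q^(m-1)) * b^(2^n) := by
    rw [hXdef]
    rw [Finset.sum_comm]
    have hper : ∀ s ∈ Finset.Ico 2 m,
        (∑ ω : Finset (Fin n) → Fin b, (circs n b r s ω).card) ≤ q^(m-1) * b^(2^n) := by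
      intro s hsmem
      rw [Finset.mem_Ico] at hsmem
      obtain ⟨hs2, hsm⟩ := hsmem
      have hsn : s ≤ 2^n := le_trans (by omega : s ≤ m) (le_trans hmn hn2pow)
      calc (∑ ω : Finset (Fin n) → Fin b, (circs n b r s ω).card)
          ≤ (pot n r s).card * b^(2^n - s) := sum_circs_card (by omega)
        _ ≤ n^((r-1)*s) * b^(2^n - s) :=
            Nat.mul_le_mul_right _ (pot_card_le hs2 hr)
        _ = q^s * b^(2^n) := by
            rw [pow_mul, hnrb, mul_pow, mul_assoc, ← pow_add]
            congr 2
            omega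
        _ ≤ q^(m-1) * b^(2^n) := by
            apply Nat.mul_le_mul_right
            exact Nat.pow_le_pow_right (by omega) (by omega)
    calc (∑ s ∈ Finset.Ico 2 m, ∑ ω : Finset (Fin n) → Fin b, (circs n b r s ω).card)
        ≤ (Finset.Ico 2 m).card • (q^(m-1) * b^(2^n)) :=
          Finset.sum_le_card_nsmul _ _ _ hper
      _ = (m - 2) * (q^(m-1) * b^(2^n)) := by rw [Nat.card_Ico, smul_eq_mul]
      _ ≤ m * (q^(m-1) * b^(2^n)) := Nat.mul_le_mul_right _ (by omega)
      _ = (m * q^(m-1)) * b^(2^n) := by ring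
  -- bad events
  set bad1 : Finset (Finset (Fin n) → Fin b) :=
    univ.filter (fun ω => T ≤ X ω) with hbad1def
  set bad2 : Finset (Finset (Fin n) → Fin b) :=
    univ.filter (fun ω => ∃ S : Finset (Fin n), S.card = k ∧
      ∀ f, f ⊆ S → f.card = r → ¬(ω f).val = 0) with hbad2def
  have hbad1 : 2 * bad1.card ≤ b^(2^n) := by
    have hmark : bad1.card • T ≤ ∑ ω ∈ bad1, X ω :=
      Finset.card_nsmul_le_sum _ _ _ (fun ω hω => (Finset.mem_filter.mp hω).2)
    have hsub : (∑ ω ∈ bad1, X ω) ≤ ∑ ω : Finset (Fin n) → Fin b, X ω :=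
      Finset.sum_le_sum_of_subset (Finset.filter_subset _ _)
    have h : bad1.card * T ≤ (m * q^(m-1)) * b^(2^n) := by
      rw [← smul_eq_mul]
      exact le_trans hmark (le_trans hsub hEX)
    have hpos : 0 < m * q^(m-1) := by
      apply Nat.mul_pos (by omega)
      exact Nat.pow_pos (by omega)
    apply Nat.le_of_mul_le_mul_left _ hpos
    calc (m * q^(m-1)) * (2 * bad1.card) = bad1.card * T := by rw [hTdef]; ring
      _ ≤ (m * q^(m-1)) * b^(2^n) := h
  -- choose bound for independence event
  set M : ℕ := k.choose r with hMdef
  have hkR : (ε' * n / 2 : ℝ) ≤ k := Nat.le_ceil _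
  have hk2r : 2*r ≤ k := by
    have hqn : (q:ℝ) ≤ (n:ℝ) := by
      have : ((q:ℕ):ℝ) ≤ ((q^(2*m) : ℕ):ℝ) := by
        exact_mod_cast Nat.le_self_pow (by omega) q
      exact_mod_cast this
    have h1 : 4*(r:ℝ) ≤ ε' * n := by nlinarith
    have h2 : ((2*r : ℕ):ℝ) ≤ (k:ℝ) := by push_cast; linarith
    exact_mod_cast h2
  have hrk : r ≤ k := by omega
  have hk1 : 1 ≤ k := by omega
  have hMb : b * (n + 2) ≤ M := by
    have hfac : (0:ℝ) < (Nat.factorial r : ℝ) := by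
      exact_mod_cast Nat.factorial_pos r
    have hpc := Nat.pow_le_choose (α := ℝ) r k
    have hsubc : ((k + 1 - r : ℕ):ℝ) = (k:ℝ) + 1 - r := by
      rw [Nat.cast_sub (by omega)]
      push_cast; ring
    have hhalf : (k:ℝ)/2 ≤ ((k + 1 - r : ℕ):ℝ) := by
      rw [hsubc]
      have : (2*(r:ℝ)) ≤ k := by exact_mod_cast hk2r
      linarith
    have hq4 : (ε' * n / 4 : ℝ) ≤ ((k + 1 - r : ℕ):ℝ) := by
      refine le_trans ?_ hhalf
      linarith
    have hεn4 : (0:ℝ) ≤ ε' * n / 4 := by positivity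
    have hpow : (ε' * n / 4)^r ≤ ((k + 1 - r : ℕ):ℝ)^r :=
      pow_le_pow_left₀ hεn4 hq4 r
    -- core inequality
    have hcore : (b:ℝ) * ((n:ℝ) + 2) * (Nat.factorial r : ℝ) ≤ (ε' * n / 4)^r := by
      have hfr : (Nat.factorial r : ℝ) ≤ (r:ℝ)^r := by
        exact_mod_cast Nat.factorial_le_pow r
      have hn2R : (n:ℝ) + 2 ≤ 2 * n := by
        have : (2:ℝ) ≤ n := by exact_mod_cast hn2
        linarith
      have hbpos : (0:ℝ) < b := by
        have : (2:ℕ) ≤ b := hb2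
        have h2 : (2:ℝ) ≤ b := by exact_mod_cast this
        linarith
      have hnpos : (0:ℝ) < n := by
        have : (2:ℝ) ≤ n := by exact_mod_cast hn2
        linarith
      have hrpos : (0:ℝ) < (r:ℝ)^r := by positivity
      have hqbn : ((n:ℝ))^r = (q:ℝ) * b * n := by
        have h1 : ((n^(r-1) : ℕ):ℝ) = (q:ℝ) * b := by exact_mod_cast hnrb
        have h2 : ((n:ℝ))^r = ((n:ℝ))^(r-1) * n := by
          rw [← pow_succ]
          congr 1
          omega
        rw [h2, ← h1]
        push_cast
        ring
      have hkey : 2*(r:ℝ)^r ≤ (ε'/4)^r * q := by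
        have h4ε : (0:ℝ) < (4/ε')^r := by positivity
        have hεr : (0:ℝ) < (ε'/4)^r := by positivity
        have hmul : (ε'/4)^r * (4/ε')^r = 1 := by
          rw [← mul_pow]
          have : (ε'/4) * (4/ε') = 1 := by field_simp
          rw [this, one_pow]
        calc 2*(r:ℝ)^r = (ε'/4)^r * (2*(r:ℝ)^r*(4/ε')^r) := by
              rw [mul_comm ((ε'/4)^r) _, mul_assoc, mul_comm ((4/ε')^r) _, ← mul_assoc,
                mul_assoc, hmul, mul_one]
          _ ≤ (ε'/4)^r * q := by
              apply mul_le_mul_of_nonneg_left hqC (le_of_lt hεr)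
      calc (b:ℝ) * ((n:ℝ) + 2) * (Nat.factorial r : ℝ)
          ≤ (b:ℝ) * (2*n) * (r:ℝ)^r := by
            apply mul_le_mul (mul_le_mul_of_nonneg_left hn2R (le_of_lt hbpos)) hfr
              (le_of_lt hfac)
            positivity
        _ = (2*(r:ℝ)^r) * (b * n) := by ring
        _ ≤ ((ε'/4)^r * q) * (b * n) := by
            apply mul_le_mul_of_nonneg_right hkey
            positivity
        _ = (ε'/4)^r * ((q:ℝ) * b * n) := by ring
        _ = (ε'/4)^r * ((n:ℝ))^r := by rw [hqbn]
        _ = (ε' * n / 4)^r := by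
            rw [← mul_pow]
            congr 1
            ring
    have hchain : (b:ℝ) * ((n:ℝ) + 2) ≤ (M:ℝ) := by
      have h1 : (b:ℝ) * ((n:ℝ) + 2) ≤ ((k + 1 - r : ℕ):ℝ)^r / (Nat.factorial r : ℝ) := by
        rw [le_div_iff₀ hfac]
        exact le_trans hcore hpow
      exact le_trans h1 hpc
    have h2 : ((b * (n+2) : ℕ):ℝ) ≤ ((M:ℕ):ℝ) := by push_cast; linarith
    exact_mod_cast h2
  have hkn : k ≤ n := by
    have hkR2 : (k:ℝ) < ε' * n / 2 + 1 := Nat.ceil_lt_add_one (by positivity)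
    have hnR : (2:ℝ) ≤ n := by exact_mod_cast hn2
    have : (k:ℝ) < (n:ℝ) := by nlinarith
    exact_mod_cast le_of_lt this
  have hM2n : M ≤ 2^n :=
    le_trans (choose_le_two_pow k r) (Nat.pow_le_pow_right (by omega) hkn)
  have hbad2 : 2 * bad2.card < b^(2^n) := by
    have hstep1 : bad2 ⊆ (Finset.powersetCard k univ).biUnion
        (fun S => univ.filter fun ω : Finset (Fin n) → Fin b =>
          ∀ f, f ⊆ S → f.card = r → ¬(ω f).val = 0) := by
      intro ω hω
      obtain ⟨S, hSk, hSind⟩ := (Finset.mem_filter.mp hω).2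
      exact Finset.mem_biUnion.mpr ⟨S, Finset.mem_powersetCard_univ.mpr hSk,
        Finset.mem_filter.mpr ⟨Finset.mem_univ _, hSind⟩⟩
    have hstep2 : bad2.card ≤ (n.choose k) * ((b-1)^M * b^(2^n - M)) := by
      refine le_trans (Finset.card_le_card hstep1) ?_
      refine le_trans Finset.card_biUnion_le ?_
      have hper : ∀ S ∈ Finset.powersetCard k (univ : Finset (Fin n)),
          (univ.filter fun ω : Finset (Fin n) → Fin b =>
            ∀ f, f ⊆ S → f.card = r → ¬(ω f).val = 0).card
          = (b-1)^M * b^(2^n - M) := by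
        intro S hS
        rw [indep_event_card (by omega) S, Finset.mem_powersetCard_univ.mp hS, hMdef]
      rw [Finset.sum_congr rfl hper, Finset.sum_const, smul_eq_mul,
        Finset.card_powersetCard, Finset.card_univ, Fintype.card_fin]
    have hY : 0 < (b-1)^M * b^(2^n - M) := by
      have h1 : 0 < b - 1 := by omega
      have h2 : 0 < b := by omega
      positivity
    calc 2 * bad2.card ≤ 2 * ((n.choose k) * ((b-1)^M * b^(2^n - M))) := by omega
      _ ≤ 2 * (2^n * ((b-1)^M * b^(2^n - M))) := by
          apply Nat.mul_le_mul_left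
          exact Nat.mul_le_mul_right _ (choose_le_two_pow n k)
      _ = 2^(n+1) * ((b-1)^M * b^(2^n - M)) := by ring
      _ < 2^(n+2) * ((b-1)^M * b^(2^n - M)) := by
          apply mul_lt_mul_of_pos_right _ hY
          apply Nat.pow_lt_pow_right (by omega) (by omega)
      _ = (2^(n+2) * (b-1)^M) * b^(2^n - M) := by ring
      _ ≤ b^M * b^(2^n - M) :=
          Nat.mul_le_mul_right _ (pow_two_mul_pred_pow_le hb2 hMb)
      _ = b^(2^n) := by rw [← pow_add]; congr 1; omega
  -- pick a good ω
  have hcardΩ : (univ : Finset (Finset (Fin n) → Fin b)).card = b^(2^n) := by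
    rw [Finset.card_univ, Fintype.card_fun, Fintype.card_fin, Fintype.card_finset,
      Fintype.card_fin]
  obtain ⟨ω, hω1, hω2⟩ : ∃ ω : Finset (Fin n) → Fin b, ω ∉ bad1 ∧ ω ∉ bad2 := by
    by_contra hcon
    push_neg at hcon
    have hsub : (univ : Finset (Finset (Fin n) → Fin b)) ⊆ bad1 ∪ bad2 := by
      intro ω _
      rcases Classical.em (ω ∈ bad1) with h | h
      · exact Finset.mem_union_left _ h
      · exact Finset.mem_union_right _ (hcon ω h)
    have h1 : b^(2^n) ≤ bad1.card + bad2.card := by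
      rw [← hcardΩ]
      exact le_trans (Finset.card_le_card hsub) (Finset.card_union_le _ _)
    omega
  have hg1 : X ω < T := by
    by_contra h
    push_neg at h
    exact hω1 (Finset.mem_filter.mpr ⟨Finset.mem_univ _, h⟩)
  have hg2 : ∀ S : Finset (Fin n), S.card = k →
      ∃ f, f ⊆ S ∧ f.card = r ∧ (ω f).val = 0 := by
    intro S hSk
    by_contra hcon
    push_neg at hcon
    apply hω2
    refine Finset.mem_filter.mpr ⟨Finset.mem_univ _, S, hSk, ?_⟩
    intro f hf1 hf2 hf3
    exact (hcon f hf1 hf2) hf3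
  -- the bad vertex set
  set B : Finset (Fin n) := (Finset.Ico 2 m).biUnion
    (fun s => (circs n b r s ω).biUnion (fun c => Finset.image c.2 univ)) with hBdef
  have hBcard : B.card ≤ m * X ω := by
    rw [hBdef]
    refine le_trans Finset.card_biUnion_le ?_
    rw [hXdef, Finset.mul_sum]
    apply Finset.sum_le_sum
    intro s hs
    rw [Finset.mem_Ico] at hs
    refine le_trans Finset.card_biUnion_le ?_
    calc (∑ c ∈ circs n b r s ω, (Finset.image c.2 univ).card)
        ≤ ∑ c ∈ circs n b r s ω, m := by
          apply Finset.sum_le_sum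
          intro c _
          calc (Finset.image c.2 univ).card ≤ (univ : Finset (Fin s)).card :=
                Finset.card_image_le
            _ = s := by rw [Finset.card_univ, Fintype.card_fin]
            _ ≤ m := by omega
      _ = (circs n b r s ω).card * m := by rw [Finset.sum_const, smul_eq_mul]
      _ = m * (circs n b r s ω).card := by ring
  -- the hypergraph
  set E : Finset (Finset (Fin n)) := univ.filter
    (fun f => f.card = r ∧ (ω f).val = 0 ∧ ∀ x ∈ f, x ∉ B) with hEdef
  refine ⟨n, E, ?_, ?_, ?_⟩
  · intro f hf
    exact (Finset.mem_filter.mp hf).2.1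
  · rintro s hs2 hsm ⟨e, v, hinj1, hinj2, hmem, hinc⟩
    have hc : (⟨e, v⟩ : (Fin s → Finset (Fin n)) × (Fin s → Fin n)) ∈ circs n b r s ω := by
      rw [circs, Finset.mem_filter]
      constructor
      · rw [pot, Finset.mem_filter]
        refine ⟨Finset.mem_univ _, hinj1, hinj2, fun j => ?_, fun j => ?_⟩
        · exact ((Finset.mem_filter.mp (hmem j)).2).1
        · exact hinc j
      · intro j
        exact (Finset.mem_filter.mp (hmem j)).2.2.1
    have hj0 : (0:ℕ) < s := by omega
    set j0 : Fin s := ⟨0, hj0⟩ with hj0def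
    have hvB : v j0 ∈ B := by
      rw [hBdef]
      apply Finset.mem_biUnion.mpr
      refine ⟨s, Finset.mem_Ico.mpr ⟨hs2, hsm⟩, ?_⟩
      apply Finset.mem_biUnion.mpr
      exact ⟨⟨e, v⟩, hc, Finset.mem_image.mpr ⟨j0, Finset.mem_univ _, rfl⟩⟩
    exact (Finset.mem_filter.mp (hmem j0)).2.2.2 (v j0) (hinc j0).1 hvB
  · intro S hS
    have hSB : (S \ B).card < k := by
      by_contra hcon
      push_neg at hcon
      obtain ⟨S'', hsub, hScard⟩ := Finset.exists_subset_card_eq hcon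
      obtain ⟨f, hf1, hf2, hf3⟩ := hg2 S'' hScard
      have hfSB : f ⊆ S \ B := hf1.trans hsub
      have hfE : f ∈ E := Finset.mem_filter.mpr ⟨Finset.mem_univ _, hf2, hf3,
        fun x hx => (Finset.mem_sdiff.mp (hfSB hx)).2⟩
      exact hS f hfE (fun x hx => (Finset.mem_sdiff.mp (hfSB hx)).1)
    have hcards : S.card ≤ (S \ B).card + B.card := Finset.card_le_card_sdiff_add_card
    have hkR2 : (k:ℝ) < ε' * n / 2 + 1 := Nat.ceil_lt_add_one (by positivity)
    have h1 : ((S \ B).card : ℝ) < ε' * n / 2 := by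
      have hc1 : ((S \ B).card : ℝ) + 1 ≤ (k:ℝ) := by exact_mod_cast hSB
      linarith
    have h2 : (B.card : ℝ) ≤ ε' * n / 2 := by
      have hc1 : B.card ≤ m * T := le_trans hBcard (Nat.mul_le_mul_left _ (le_of_lt hg1))
      have hc2 : (B.card : ℝ) ≤ 2*(m:ℝ)^2*(q:ℝ)^(m-1) := by
        have : ((m * T : ℕ):ℝ) = 2*(m:ℝ)^2*(q:ℝ)^(m-1) := by
          rw [hTdef]; push_cast; ring
        rw [← this]
        exact_mod_cast hc1
      have hc3 : 4*(m:ℝ)^2*(q:ℝ)^(m-1) ≤ ε' * n := by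
        have hqm : (q:ℝ)*(q:ℝ)^(m-1) ≤ (q:ℝ)^(2*m) := by
          rw [← pow_succ']
          apply pow_le_pow_right₀ hq1R
          omega
        have hnq : (n:ℝ) = (q:ℝ)^(2*m) := by rw [hndef]; push_cast; ring
        have hqpow : (0:ℝ) ≤ (q:ℝ)^(m-1) := by positivity
        calc 4*(m:ℝ)^2*(q:ℝ)^(m-1) ≤ (ε' * q) * (q:ℝ)^(m-1) :=
              mul_le_mul_of_nonneg_right hqA hqpow
          _ = ε' * ((q:ℝ)*(q:ℝ)^(m-1)) := by ring
          _ ≤ ε' * (q:ℝ)^(2*m) :=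
              mul_le_mul_of_nonneg_left hqm (le_of_lt hε'pos)
          _ = ε' * n := by rw [hnq]
      linarith
    have hcR : (S.card : ℝ) ≤ ((S \ B).card : ℝ) + (B.card : ℝ) := by exact_mod_cast hcards
    have hnn : (0:ℝ) ≤ (n:ℝ) := Nat.cast_nonneg n
    have hfin : ε' * n ≤ ε * n := mul_le_mul_of_nonneg_right hε'le hnn
    linarith
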